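/- Let κ ≥ 2, let δ > 0 be fixed, and let γ_1,…,γ_κ be real numbers with γ_j > 1/2 for all j. Let D = (d_{ij}) be an m×κ matrix with entries in {0,1,−1} such that every column has exactly one nonzero entry and every row has at least one nonzero entry. For 1 ≤ i ≤ m let I_i(D) = { j : d_{ij} ≠ 0 } be the set of column indices whose nonzero entry lies in row i, and set Γ_i(D) = Σ_{j ∈ I_i(D)} γ_j. Then for all n ≥ 1: V_n^{−2Σ_{j=1}^κ γ_j} ∫_{ℝ^n}⋯∫_{ℝ^n} ∏_{j=1}^κ ( | Σ_{i=1}^m d_{ij}·x_i |^{−2γ_j n} · 1_{ | Σ_{i=1}^m d_{ij}·x_i | > R_n(δ) } ) dx_1⋯dx_m = δ^{m − 2Σ_{j=1}^κ γ_j} · ∏_{i=1}^m 1/(2 Γ_i(D) − 1). -/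

import Mathlib

open MeasureTheory

/-- `V_n = π^{n/2} / Γ(n/2 + 1)`, the volume of the unit ball in `ℝⁿ`. -/
noncomputable def unitBallVol (n : ℕ) : ℝ :=
  Real.pi ^ ((n : ℝ) / 2) / Real.Gamma ((n : ℝ) / 2 + 1)

/-- `R_n(δ) = (δ / V_n)^{1/n}`, the radius of a ball of volume `δ` in `ℝⁿ`. -/
noncomputable def cutRadius (n : ℕ) (δ : ℝ) : ℝ :=
  (δ / unitBallVol n) ^ (1 / (n : ℝ))

lemma unitBallVol_pos (n : ℕ) : 0 < unitBallVol n := by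
  have h1 : (0:ℝ) < (n:ℝ)/2 + 1 := by positivity
  exact div_pos (Real.rpow_pos_of_pos Real.pi_pos _) (Real.Gamma_pos_of_pos h1)

lemma cutRadius_pos {n : ℕ} {δ : ℝ} (hδ : 0 < δ) : 0 < cutRadius n δ :=
  Real.rpow_pos_of_pos (div_pos hδ (unitBallVol_pos n)) _

lemma volume_unitBall (n : ℕ) (hn : 1 ≤ n) :
    (volume (Metric.ball (0 : EuclideanSpace ℝ (Fin n)) 1)).toReal = unitBallVol n := by
  haveI : Nonempty (Fin n) := ⟨⟨0, hn⟩⟩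
  rw [EuclideanSpace.volume_ball]
  rw [Fintype.card_fin]
  simp only [ENNReal.ofReal_one, one_pow, one_mul]
  rw [ENNReal.toReal_ofReal (by
    apply div_nonneg (pow_nonneg (Real.sqrt_nonneg _) _)
    exact (Real.Gamma_pos_of_pos (by positivity)).le)]
  unfold unitBallVol
  congr 1
  rw [Real.sqrt_eq_rpow, ← Real.rpow_natCast (Real.pi ^ ((1:ℝ)/2)) n,
    ← Real.rpow_mul Real.pi_pos.le]
  congr 1
  ring

lemma single_integral (n : ℕ) (hn : 1 ≤ n) {δ : ℝ} (hδ : 0 < δ) {Γ : ℝ} (hΓ : 1/2 < Γ) :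
    (∫ y : EuclideanSpace ℝ (Fin n),
      (if cutRadius n δ < ‖y‖ then ‖y‖ ^ (-(2 * Γ * (n:ℝ))) else 0))
    = unitBallVol n ^ (2*Γ) * δ ^ (1 - 2*Γ) / (2*Γ - 1) := by
  haveI : Nonempty (Fin n) := ⟨⟨0, hn⟩⟩
  haveI : Nontrivial (EuclideanSpace ℝ (Fin n)) :=
    Module.nontrivial_of_finrank_pos (R := ℝ) (by rw [finrank_euclideanSpace_fin]; omega)
  have hV : 0 < unitBallVol n := unitBallVol_pos n
  have hR : 0 < cutRadius n δ := cutRadius_pos hδ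
  have hn' : (1:ℝ) ≤ (n:ℝ) := by exact_mod_cast hn
  have hs : (n:ℝ) < 2*Γ*n := by nlinarith
  have hdim : Module.finrank ℝ (EuclideanSpace ℝ (Fin n)) = n := finrank_euclideanSpace_fin
  rw [MeasureTheory.integral_fun_norm_addHaar (volume)
    (fun t : ℝ => if cutRadius n δ < t then t ^ (-(2*Γ*(n:ℝ))) else 0), hdim]
  have hinner : (∫ y in Set.Ioi (0:ℝ),
      y ^ (n - 1) • (if cutRadius n δ < y then y ^ (-(2*Γ*(n:ℝ))) else 0))
      = cutRadius n δ ^ ((n:ℝ) - 2*Γ*n) / (2*Γ*(n:ℝ) - n) := by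
    have h1 : ∀ y ∈ Set.Ioi (0:ℝ),
        y ^ (n-1) • (if cutRadius n δ < y then y ^ (-(2*Γ*(n:ℝ))) else 0)
        = Set.indicator (Set.Ioi (cutRadius n δ))
            (fun y => y ^ ((n:ℝ) - 1 - 2*Γ*n)) y := by
      intro y hy
      by_cases h : cutRadius n δ < y
      · rw [if_pos h, Set.indicator_of_mem (Set.mem_Ioi.mpr h), smul_eq_mul,
          ← Real.rpow_natCast y (n-1), ← Real.rpow_add hy]
        congr 1
        rw [Nat.cast_sub hn, Nat.cast_one]
        ring
      · rw [if_neg h, smul_zero, Set.indicator_of_notMem (by simpa using h)]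
    rw [setIntegral_congr_fun measurableSet_Ioi h1,
      setIntegral_indicator measurableSet_Ioi, Set.Ioi_inter_Ioi,
      sup_eq_right.mpr hR.le,
      integral_Ioi_rpow_of_lt (by linarith) hR]
    have he : (n:ℝ) - 1 - 2*Γ*n + 1 = (n:ℝ) - 2*Γ*n := by ring
    rw [he]
    have h2 : (n:ℝ) - 2*Γ*n ≠ 0 := by linarith
    have h3 : 2*Γ*(n:ℝ) - n ≠ 0 := by linarith
    field_simp
    rw [← one_div_neg_eq_neg_one_div]
    ring
  rw [hinner, measureReal_def, volume_unitBall n hn]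
  have key1 : cutRadius n δ ^ ((n:ℝ) - 2*Γ*n)
      = δ ^ (1-2*Γ) * unitBallVol n ^ (2*Γ-1) := by
    rw [cutRadius, ← Real.rpow_mul (div_pos hδ hV).le]
    have hn0 : (n:ℝ) ≠ 0 := by linarith
    have : 1/(n:ℝ) * ((n:ℝ) - 2*Γ*n) = 1 - 2*Γ := by field_simp
    rw [this, Real.div_rpow hδ.le hV.le, div_eq_mul_inv,
      ← Real.rpow_neg hV.le, show -(1-2*Γ) = 2*Γ-1 by ring]
  have key2 : unitBallVol n ^ (2*Γ) = unitBallVol n * unitBallVol n ^ (2*Γ-1) := by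
    have h := Real.rpow_add hV 1 (2*Γ-1)
    rw [Real.rpow_one] at h
    rw [← h]
    congr 1
    ring
  rw [key1, key2, nsmul_eq_mul, smul_eq_mul]
  have h2Γ : 2*Γ - 1 ≠ 0 := by linarith
  have h3 : 2*Γ*(n:ℝ) - n ≠ 0 := by linarith
  field_simp

/-- for a `{0,±1}`-matrix `D` with exactly one nonzero entry in each column
and no zero row, with `Γ_i(D) = Σ_{j ∈ I_i(D)} γ_j` summing the exponents over the columns
whose nonzero entry lies in row `i`, one has for all `n ≥ 1`:
`V_n^{-2Σγ_j} ∫⋯∫ ∏_j |Σ_i d_{ij} x_i|^{-2γ_j n} 1_{|Σ_i d_{ij} x_i| > R_n(δ)} dx_1⋯dx_m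
 = δ^{m - 2Σγ_j} ∏_i (2Γ_i(D) - 1)⁻¹`. -/
theorem product_form_mixed_exponent_integral
    (κ : ℕ) (hκ : 2 ≤ κ) (δ : ℝ) (hδ : 0 < δ)
    (γ : Fin κ → ℝ) (hγ : ∀ j, 1 / 2 < γ j)
    (m : ℕ) (hm1 : 1 ≤ m)
    (D : Matrix (Fin m) (Fin κ) ℤ)
    (hent : ∀ i j, D i j = 0 ∨ D i j = 1 ∨ D i j = -1)
    (hcol : ∀ j, ∃! i, D i j ≠ 0)
    (hrow : ∀ i, ∃ j, D i j ≠ 0)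
    (n : ℕ) (hn : 1 ≤ n) :
    unitBallVol n ^ (-(2 * ∑ j : Fin κ, γ j)) *
      ∫ x : Fin m → EuclideanSpace ℝ (Fin n),
        ∏ j : Fin κ,
          (if cutRadius n δ < ‖∑ i : Fin m, (D i j : ℝ) • x i‖ then
            ‖∑ i : Fin m, (D i j : ℝ) • x i‖ ^ (-(2 * γ j * (n : ℝ)))
          else 0)
    = δ ^ ((m : ℝ) - 2 * ∑ j : Fin κ, γ j) *
        ∏ i : Fin m,
          1 / (2 * (∑ j ∈ Finset.univ.filter fun j => D i j ≠ 0, γ j) - 1) := by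
  choose r hr using hcol
  have hr1 : ∀ j, D (r j) j ≠ 0 := fun j => (hr j).1
  have hr2 : ∀ j i, D i j ≠ 0 → i = r j := fun j i h => (hr j).2 i h
  have hfib : ∀ i : Fin m, (Finset.univ.filter fun j => D i j ≠ 0)
      = (Finset.univ.filter fun j : Fin κ => r j = i) := by
    intro i; ext j
    simp only [Finset.mem_filter, Finset.mem_univ, true_and]
    constructor
    · intro h; exact (hr2 j i h).symm
    · intro h; rw [← h]; exact hr1 j
  have hΓpos : ∀ i : Fin m,
      1/2 < ∑ j ∈ Finset.univ.filter (fun j => D i j ≠ 0), γ j := by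
    intro i
    obtain ⟨j0, hj0⟩ := hrow i
    have hmem : j0 ∈ Finset.univ.filter (fun j => D i j ≠ 0) := by
      simp [hj0]
    calc (1:ℝ)/2 < γ j0 := hγ j0
      _ ≤ _ := Finset.single_le_sum
          (fun j _ => le_of_lt (lt_trans (by norm_num) (hγ j))) hmem
  have hnorm : ∀ (j : Fin κ) (x : Fin m → EuclideanSpace ℝ (Fin n)),
      ‖∑ i : Fin m, (D i j : ℝ) • x i‖ = ‖x (r j)‖ := by
    intro j x
    rw [Finset.sum_eq_single (r j)]
    · have habs : |(D (r j) j : ℝ)| = 1 := by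
        rcases hent (r j) j with h | h | h
        · exact absurd h (hr1 j)
        · rw [h]; norm_num
        · rw [h]; norm_num
      rw [norm_smul, Real.norm_eq_abs, habs, one_mul]
    · intro i _ hne
      have hz : D i j = 0 := by
        by_contra h; exact hne (hr2 j i h)
      rw [hz]; simp
    · intro h; exact absurd (Finset.mem_univ _) h
  set G : Fin m → EuclideanSpace ℝ (Fin n) → ℝ := fun i y =>
    if cutRadius n δ < ‖y‖ then
      ‖y‖ ^ (-(2 * (∑ j ∈ Finset.univ.filter fun j => D i j ≠ 0, γ j) * (n:ℝ)))
    else 0 with hG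
  have hfun : ∀ x : Fin m → EuclideanSpace ℝ (Fin n),
      (∏ j : Fin κ,
        (if cutRadius n δ < ‖∑ i : Fin m, (D i j : ℝ) • x i‖ then
          ‖∑ i : Fin m, (D i j : ℝ) • x i‖ ^ (-(2 * γ j * (n : ℝ)))
        else 0))
      = ∏ i : Fin m, G i (x i) := by
    intro x
    have step1 : ∀ j ∈ (Finset.univ : Finset (Fin κ)),
        (if cutRadius n δ < ‖∑ i : Fin m, (D i j : ℝ) • x i‖ then
          ‖∑ i : Fin m, (D i j : ℝ) • x i‖ ^ (-(2 * γ j * (n : ℝ))) else 0)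
        = (if cutRadius n δ < ‖x (r j)‖ then
            ‖x (r j)‖ ^ (-(2 * γ j * (n : ℝ))) else 0) := by
      intro j _; rw [hnorm j x]
    rw [Finset.prod_congr rfl step1,
      ← Finset.prod_fiberwise Finset.univ r
        (fun j => if cutRadius n δ < ‖x (r j)‖ then
          ‖x (r j)‖ ^ (-(2 * γ j * (n:ℝ))) else 0)]
    refine Finset.prod_congr rfl fun i _ => ?_
    have hx : ∀ j ∈ Finset.univ.filter (fun j : Fin κ => r j = i),
        (if cutRadius n δ < ‖x (r j)‖ then
          ‖x (r j)‖ ^ (-(2 * γ j * (n:ℝ))) else 0)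
        = (if cutRadius n δ < ‖x i‖ then ‖x i‖ ^ (-(2 * γ j * (n:ℝ))) else 0) := by
      intro j hj
      rw [(Finset.mem_filter.mp hj).2]
    rw [Finset.prod_congr rfl hx, hG]
    obtain ⟨j0, hj0⟩ := hrow i
    have hj0' : j0 ∈ Finset.univ.filter (fun j : Fin κ => r j = i) := by
      rw [← hfib]; simp [hj0]
    by_cases hcut : cutRadius n δ < ‖x i‖
    · simp only [if_pos hcut]
      rw [← Real.rpow_sum_of_pos (lt_trans (cutRadius_pos hδ) hcut), hfib i]
      congr 1
      rw [Finset.mul_sum, Finset.sum_mul, ← Finset.sum_neg_distrib]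
    · simp only [if_neg hcut]
      exact Finset.prod_eq_zero hj0' rfl
  simp_rw [hfun]
  rw [MeasureTheory.volume_pi, MeasureTheory.integral_fintype_prod_eq_prod (ι := Fin m) G]
  have hGi : ∀ i : Fin m, (∫ y, G i y)
      = unitBallVol n ^ (2 * (∑ j ∈ Finset.univ.filter fun j => D i j ≠ 0, γ j))
        * δ ^ (1 - 2 * (∑ j ∈ Finset.univ.filter fun j => D i j ≠ 0, γ j))
        / (2 * (∑ j ∈ Finset.univ.filter fun j => D i j ≠ 0, γ j) - 1) := by
    intro i
    exact single_integral n hn hδ (hΓpos i)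
  rw [Finset.prod_congr rfl (fun i _ => hGi i)]
  have hV : 0 < unitBallVol n := unitBallVol_pos n
  have hsum : (∑ i : Fin m, ∑ j ∈ Finset.univ.filter (fun j => D i j ≠ 0), γ j)
      = ∑ j : Fin κ, γ j := by
    rw [Finset.sum_congr rfl (fun i _ => by rw [hfib i])]
    exact Finset.sum_fiberwise Finset.univ r γ
  rw [Finset.prod_div_distrib, Finset.prod_mul_distrib,
    ← Real.rpow_sum_of_pos hV, ← Real.rpow_sum_of_pos hδ]
  have e1 : (∑ i : Fin m, 2 * (∑ j ∈ Finset.univ.filter fun j => D i j ≠ 0, γ j))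
      = 2 * ∑ j : Fin κ, γ j := by
    rw [← Finset.mul_sum, hsum]
  have e2 : (∑ i : Fin m, (1 - 2 * (∑ j ∈ Finset.univ.filter fun j => D i j ≠ 0, γ j)))
      = (m : ℝ) - 2 * ∑ j : Fin κ, γ j := by
    rw [Finset.sum_sub_distrib, ← Finset.mul_sum, hsum, Finset.sum_const]
    simp
  rw [e1, e2]
  have hV2 : unitBallVol n ^ (-(2 * ∑ j : Fin κ, γ j))
      * unitBallVol n ^ (2 * ∑ j : Fin κ, γ j) = 1 := by
    rw [← Real.rpow_add hV, neg_add_cancel, Real.rpow_zero]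
  simp only [one_div, Finset.prod_inv_distrib]
  set A := unitBallVol n ^ (-(2 * ∑ j : Fin κ, γ j))
  set B := unitBallVol n ^ (2 * ∑ j : Fin κ, γ j)
  set Cd := δ ^ ((m:ℝ) - 2 * ∑ j : Fin κ, γ j)
  set P := ∏ i : Fin m,
    (2 * (∑ j ∈ Finset.univ.filter fun j => D i j ≠ 0, γ j) - 1)
  calc A * (B * Cd / P) = (A * B) * (Cd * P⁻¹) := by ring
    _ = Cd * P⁻¹ := by rw [hV2, one_mul]
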